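/- Let G = (V,E) be a simple graph with n vertices and m edges, let η : E → {1,…,m} be a bijection, and let e ∈ E. Then for every integer i with 1 ≤ i ≤ n − 2, one has i·|NB_{i+1}(G,e)| ≤ (m − i)·|NB_i(G,e)|. -/

import Mathlib

open Finset

variable {V : Type*}

/-- The number of proper colorings of `G` using the colors `{1, …, k}`. -/
noncomputable def propCol (G : SimpleGraph V) (k : ℕ) : ℕ :=
  Set.ncard {f : V → ℕ | (∀ v, f v ∈ Finset.Icc 1 k) ∧ ∀ ⦃a b : V⦄, G.Adj a b → f a ≠ f b}

/-- The number of `L`-colorings of `G`, for an assignment `L` of color lists. -/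
noncomputable def listCol (G : SimpleGraph V) (L : V → Finset ℕ) : ℕ :=
  Set.ncard {f : V → ℕ | (∀ v, f v ∈ L v) ∧ ∀ ⦃a b : V⦄, G.Adj a b → f a ≠ f b}

/-- `α(uv) = |L(u) \ L(v)|`, symmetrized (when `|L(u)| = |L(v)|` one has
`|L(u) \ L(v)| = |L(v) \ L(u)|`, so this is exactly `|L(u) \ L(v)|`). -/
noncomputable def alphaL (L : V → Finset ℕ) : Sym2 V → ℕ :=
  Sym2.lift ⟨fun a b => ((L a) \ (L b)).card ⊔ ((L b) \ (L a)).card,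
    fun a b => by simp [sup_comm]⟩

/-- `B` is the edge set of a broken cycle of `G` with respect to the edge ordering `η`:
the edge set of a path `v₁v₂⋯v_r` of `G` with `r ≥ 3` such that `v₁v_r ∈ E(G)` and
`η(v₁v_r) < η(v_iv_{i+1})` for each `i`. -/
def IsBrokenCycle [DecidableEq V] (G : SimpleGraph V) (η : Sym2 V → ℕ)
    (B : Finset (Sym2 V)) : Prop :=
  ∃ (u w : V) (p : G.Walk u w), p.IsPath ∧ 2 ≤ p.length ∧ G.Adj u w ∧
    (∀ f ∈ p.edges, η s(u, w) < η f) ∧ B = p.edges.toFinset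

/-- `NB_i(G)`: the collection of `i`-element subsets of `E(G)` containing no broken cycle. -/
def NBset [DecidableEq V] (G : SimpleGraph V) (η : Sym2 V → ℕ) (i : ℕ) :
    Set (Finset (Sym2 V)) :=
  {A : Finset (Sym2 V) | ↑A ⊆ G.edgeSet ∧ A.card = i ∧
    ∀ B : Finset (Sym2 V), IsBrokenCycle G η B → ¬ B ⊆ A}

/-- `|NB_i(G)|`. -/
noncomputable def NBcard [DecidableEq V] (G : SimpleGraph V) (η : Sym2 V → ℕ) (i : ℕ) : ℕ :=
  Set.ncard (NBset G η i)

/-- `|NB_i(G, e)|`: the number of `i`-element subsets of `E(G)` that contain `e`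
and contain no broken cycle. -/
noncomputable def NBe [DecidableEq V] (G : SimpleGraph V) (η : Sym2 V → ℕ)
    (i : ℕ) (e : Sym2 V) : ℕ :=
  Set.ncard {A : Finset (Sym2 V) | A ∈ NBset G η i ∧ e ∈ A}

/-- `Q_η(G, e, x)`, where `n` is the number of vertices of `G`. -/
noncomputable def Qeta [DecidableEq V] [Fintype V] (G : SimpleGraph V)
    (η : Sym2 V → ℕ) (e : Sym2 V) (x : ℝ) : ℝ :=
  (∑ i ∈ (Finset.Icc 1 (Fintype.card V - 1)).filter (fun i => Odd i),
      (NBe G η i e : ℝ) / i * x ^ (Fintype.card V - i)) -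
  ∑ i ∈ (Finset.Icc 2 (Fintype.card V - 1)).filter (fun i => Even i),
      (NBe G η i e : ℝ) * x ^ (Fintype.card V - i)

/-- The contraction `G/e` of the edge `e = uv`: the vertex `v` is merged into `u`
(so `v` becomes an isolated vertex), loops are removed and parallel edges are merged. -/
def contractE (G : SimpleGraph V) (u v : V) : SimpleGraph V :=
  SimpleGraph.fromRel (fun a b =>
    (G.Adj a b ∧ a ≠ v ∧ b ≠ v) ∨ (a = u ∧ b ≠ v ∧ G.Adj v b))

/-- The number of triangles (3-cliques) of `H`. -/
noncomputable def triangleCount (H : SimpleGraph V) : ℕ :=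
  Set.ncard {s : Finset V | H.IsNClique 3 s}

/-- `|NB₂(H)| = C(|E(H)|, 2) − △(H)`: the number of 2-element subsets of `E(H)`
containing no broken cycle (this count is independent of the edge ordering). -/
noncomputable def NB2 (H : SimpleGraph V) : ℕ :=
  Nat.choose (H.edgeSet.ncard) 2 - triangleCount H

/-- `C` is the edge set of a 4-cycle of `G`. -/
def IsFourCycle [DecidableEq V] (G : SimpleGraph V) (C : Finset (Sym2 V)) : Prop :=
  ∃ (u : V) (p : G.Walk u u), p.IsCycle ∧ p.length = 4 ∧ C = p.edges.toFinset

/-- The number of 4-cycles of `G` containing the edge `e`. -/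
noncomputable def fourCyclesOn [DecidableEq V] (G : SimpleGraph V) (e : Sym2 V) : ℕ :=
  Set.ncard {C : Finset (Sym2 V) | IsFourCycle G C ∧ e ∈ C}

/-- `c₄(G)`: the maximum over edges `e` of the number of 4-cycles of `G` containing `e`,
i.e. the least `r` such that every edge lies in at most `r` 4-cycles. -/
noncomputable def c4 [DecidableEq V] (G : SimpleGraph V) : ℕ :=
  sSup {r : ℕ | ∃ e ∈ G.edgeSet, r = fourCyclesOn G e}

/-- `β(T)` for the connected component `c` of `H`: the number of colors lying in every
list `L w` for `w` a vertex of the component `c`. -/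
noncomputable def betaComp (L : V → Finset ℕ) (H : SimpleGraph V)
    (c : H.ConnectedComponent) : ℕ :=
  Set.ncard {x : ℕ | ∀ w : V, H.connectedComponentMk w = c → x ∈ L w}

/-- `∏_j β(T_j)` over the connected components `T_j` of the spanning subgraph `H`. -/
noncomputable def betaProd (L : V → Finset ℕ) (H : SimpleGraph V) : ℕ :=
  ∏ᶠ c : H.ConnectedComponent, betaComp L H c

theorem stmt5 [Fintype V] [DecidableEq V] (G : SimpleGraph V) [DecidableRel G.Adj]
    (n m : ℕ) (hn : n = Fintype.card V) (hm : m = G.edgeFinset.card)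
    (η : Sym2 V → ℕ) (hη : Set.BijOn η G.edgeSet (Set.Icc 1 m))
    (e : Sym2 V) (he : e ∈ G.edgeSet)
    (i : ℕ) (hi1 : 1 ≤ i) (hi2 : i ≤ n - 2) :
    (i : ℤ) * (NBe G η (i + 1) e : ℤ) ≤ ((m : ℤ) - i) * (NBe G η i e : ℤ) := by
  classical
  -- Finset versions of NBe sets
  set S1 : Finset (Finset (Sym2 V)) :=
    {A : Finset (Sym2 V) | A ∈ NBset G η (i + 1) ∧ e ∈ A}.toFinset with hS1
  set S0 : Finset (Finset (Sym2 V)) :=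
    {A : Finset (Sym2 V) | A ∈ NBset G η i ∧ e ∈ A}.toFinset with hS0
  have hNBe1 : NBe G η (i + 1) e = S1.card := by
    rw [NBe, ← Set.ncard_coe_finset]; congr 1; ext A; simp [hS1]
  have hNBe0 : NBe G η i e = S0.card := by
    rw [NBe, ← Set.ncard_coe_finset]; congr 1; ext A; simp [hS0]
  have hmemS1 : ∀ A, A ∈ S1 ↔ A ∈ NBset G η (i + 1) ∧ e ∈ A := by
    intro A; simp [hS1]
  have hmemS0 : ∀ A, A ∈ S0 ↔ A ∈ NBset G η i ∧ e ∈ A := by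
    intro A; simp [hS0]
  -- Double counting sets
  set T1 : Finset ((_ : Finset (Sym2 V)) × Sym2 V) :=
    S1.sigma (fun A => A.erase e) with hT1
  set T0 : Finset ((_ : Finset (Sym2 V)) × Sym2 V) :=
    S0.sigma (fun A => G.edgeFinset \ A) with hT0
  -- Cardinality of T1
  have hcard1 : T1.card = i * S1.card := by
    rw [hT1, Finset.card_sigma]
    rw [Finset.sum_congr rfl (fun A hA => ?_), Finset.sum_const, smul_eq_mul, mul_comm]
    obtain ⟨hANB, heA⟩ := (hmemS1 A).mp hA
    rw [Finset.card_erase_of_mem heA, hANB.2.1]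
    simp
  -- Cardinality of T0
  have hcard0 : T0.card = (m - i) * S0.card := by
    rw [hT0, Finset.card_sigma]
    rw [Finset.sum_congr rfl (fun A hA => ?_), Finset.sum_const, smul_eq_mul, mul_comm]
    obtain ⟨hANB, heA⟩ := (hmemS0 A).mp hA
    have hsub : A ⊆ G.edgeFinset := fun x hx => by
      simpa [SimpleGraph.mem_edgeFinset] using hANB.1 hx
    rw [Finset.card_sdiff_of_subset hsub, hANB.2.1, hm]
  -- The injection T1 → T0
  have hinj : T1.card ≤ T0.card := by
    apply Finset.card_le_card_of_injOn (fun p => ⟨p.1.erase p.2, p.2⟩)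
    · rintro ⟨A, f⟩ hp
      rw [Finset.mem_coe, Finset.mem_sigma] at hp ⊢
      obtain ⟨hA, hf⟩ := hp
      obtain ⟨hANB, heA⟩ := (hmemS1 A).mp hA
      have hfe : f ≠ e := (Finset.mem_erase.mp hf).1
      have hfA : f ∈ A := (Finset.mem_erase.mp hf).2
      constructor
      · rw [hmemS0]
        refine ⟨⟨fun x hx => hANB.1 (Finset.erase_subset _ _ hx), ?_, ?_⟩, ?_⟩
        · rw [Finset.card_erase_of_mem hfA, hANB.2.1]; simp
        · intro B hB hBsub
          exact hANB.2.2 B hB (hBsub.trans (Finset.erase_subset _ _))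
        · exact Finset.mem_erase.mpr ⟨fun h => hfe h.symm, heA⟩
      · exact Finset.mem_sdiff.mpr ⟨by simpa [SimpleGraph.mem_edgeFinset] using hANB.1 hfA,
          Finset.notMem_erase _ _⟩
    · rintro ⟨A, f⟩ hp ⟨A', f'⟩ hp' heq
      simp only [hT1, Finset.mem_coe, Finset.mem_sigma] at hp hp'
      have hfA : f ∈ A := (Finset.mem_erase.mp hp.2).2
      have hfA' : f' ∈ A' := (Finset.mem_erase.mp hp'.2).2
      obtain ⟨h1, h2⟩ := Sigma.mk.inj_iff.mp heq
      have hff' : f = f' := by exact_mod_cast eq_of_heq h2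
      subst hff'
      have : A = A' := by
        rw [← Finset.insert_erase hfA, ← Finset.insert_erase hfA', h1]
      simp [this]
  -- Natural number inequality
  have hnat : i * NBe G η (i + 1) e ≤ (m - i) * NBe G η i e := by
    rw [hNBe1, hNBe0, ← hcard1, ← hcard0]; exact hinj
  -- Conclude in ℤ, splitting on whether NBe G η i e = 0
  rcases Nat.eq_zero_or_pos (NBe G η i e) with h0 | hpos
  · have h1 : NBe G η (i + 1) e = 0 := by
      have := hnat
      rw [h0, mul_zero, Nat.le_zero, Nat.mul_eq_zero] at this
      rcases this with h | h
      · omega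
      · exact h
    simp [h0, h1]
  · -- NBe G η i e > 0 gives some A ∈ S0, hence i ≤ m
    have him : i ≤ m := by
      rw [hNBe0] at hpos
      obtain ⟨A, hA⟩ := Finset.card_pos.mp hpos
      obtain ⟨hANB, -⟩ := (hmemS0 A).mp hA
      have hsub : A ⊆ G.edgeFinset := fun x hx => by
        simpa [SimpleGraph.mem_edgeFinset] using hANB.1 hx
      calc i = A.card := hANB.2.1.symm
        _ ≤ G.edgeFinset.card := Finset.card_le_card hsub
        _ = m := hm.symm
    have := hnat
    zify [him] at this
    exact_mod_cast this
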